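/- For every n ≥ 1 there is a unique Castelnuovo polynomial of weight n maximizing c(s) = ∑_j s_j(s_{j-1} - s_{j-2}) among Castelnuovo polynomials of weight n, namely the one of the form s(t) = 1 + 2t + ... + (u-1)t^{u-2} + v t^{u-1} with 0 < v ≤ u-1 (staircase filled greedily), and for it c(s) = n - 1. -/
import Mathlib


/-- A Castelnuovo function, indexed by `ℤ` (vanishing in negative degrees). -/
def IsCastelnuovo (s : ℤ → ℤ) : Prop :=
  (Function.support s).Finite ∧ (∀ i : ℤ, i < 0 → s i = 0) ∧ (∀ i : ℤ, 0 ≤ s i) ∧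
  ∃ σ : ℤ, 0 ≤ σ ∧ (∀ i : ℤ, 0 ≤ i → i < σ → s i = i + 1) ∧ s σ ≤ σ ∧
    ∀ i : ℤ, σ ≤ i → s (i + 1) ≤ s i

/-- The weight of a Castelnuovo function. -/
noncomputable def castWeight (s : ℤ → ℤ) : ℤ := ∑ᶠ j : ℤ, s j

/-- `c(s) = ∑_j s_j (s_{j-1} - s_{j-2})`. -/
noncomputable def castC (s : ℤ → ℤ) : ℤ := ∑ᶠ j : ℤ, s j * (s (j - 1) - s (j - 2))


lemma iccSuccTop (a b : ℤ) (h : a ≤ b + 1) :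
    Finset.Icc a (b+1) = insert (b+1) (Finset.Icc a b) := by
  ext x; simp [Finset.mem_Icc, Finset.mem_insert]; omega

lemma gaussSumInt : ∀ m : ℤ, -1 ≤ m → 2 * ∑ j ∈ Finset.Icc (0:ℤ) m, (j+1) = (m+1)*(m+2) := by
  refine Int.le_induction ?_ ?_
  · norm_num
  · intro m hm ih
    rw [iccSuccTop 0 m (by omega), Finset.sum_insert (by simp)]
    linear_combination ih

lemma decompExists : ∀ n : ℤ, 1 ≤ n → ∃ u v : ℤ, 0 < v ∧ v ≤ u ∧ (u-1)*u + 2*v = 2*n := by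
  refine Int.le_induction ?_ ?_
  · exact ⟨1, 1, by norm_num⟩
  · rintro n hn ⟨u, v, hv, hvu, hs⟩
    rcases lt_or_eq_of_le hvu with h | h
    · exact ⟨u, v + 1, by omega, by omega, by linarith⟩
    · exact ⟨u + 1, 1, by omega, by omega, by nlinarith⟩

lemma decompUnique (u v u' v' : ℤ) (hv : 0 < v) (hvu : v ≤ u) (hv' : 0 < v') (hvu' : v' ≤ u')
    (h : (u-1)*u + 2*v = (u'-1)*u' + 2*v') : u = u' ∧ v = v' := by
  have hu : u = u' := by
    rcases lt_trichotomy u u' with h1 | h1 | h1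
    · exfalso
      have hk : (0:ℤ) ≤ (u' - u - 1) * (u' + u) :=
        mul_nonneg (by linarith) (by linarith)
      nlinarith
    · exact h1
    · exfalso
      have hk : (0:ℤ) ≤ (u - u' - 1) * (u + u') :=
        mul_nonneg (by linarith) (by linarith)
      nlinarith
  subst hu
  exact ⟨rfl, by linarith⟩

def greedyF (u v : ℤ) : ℤ → ℤ := fun j =>
  if 0 ≤ j ∧ j < u - 1 then j + 1 else if j = u - 1 then v else 0

lemma greedyF_zero {u v : ℤ} (hv : 0 < v) (hvu : v ≤ u) : greedyF u v 0 = 1 := by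
  unfold greedyF; split_ifs with h1 h2 <;> omega

lemma greedyF_support (u v : ℤ) (hv : 0 < v) (hvu : v ≤ u) :
    Function.support (greedyF u v) ⊆ ↑(Finset.Icc (0:ℤ) (u-1)) := by
  intro j hj
  simp only [Function.mem_support, greedyF] at hj
  simp only [Finset.coe_Icc, Set.mem_Icc]
  split_ifs at hj with h1 h2
  · omega
  · omega
  · exact absurd rfl hj

lemma greedy_props (u v : ℤ) (hv : 0 < v) (hvu : v ≤ u) :
    ∃ σ : ℤ, 0 ≤ σ ∧ (∀ i : ℤ, 0 ≤ i → i < σ → greedyF u v i = i + 1) ∧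
      greedyF u v σ ≤ σ ∧ (∀ i : ℤ, σ ≤ i → greedyF u v (i + 1) ≤ greedyF u v i) ∧
      (∀ j : ℤ, σ < j → greedyF u v j = 0) := by
  rcases eq_or_lt_of_le hvu with h | h
  · -- v = u : use σ = u
    refine ⟨u, by omega, ?_, ?_, ?_, ?_⟩
    · intro i h0 hi; unfold greedyF; split_ifs with h1 h2 <;> omega
    · unfold greedyF; split_ifs with h1 h2 <;> omega
    · intro i hi; unfold greedyF; split_ifs with h1 h2 h3 h4 h5 h6 h7 h8 <;> omega
    · intro j hj; unfold greedyF; split_ifs with h1 h2 <;> omega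
  · -- v < u : use σ = u - 1
    refine ⟨u - 1, by omega, ?_, ?_, ?_, ?_⟩
    · intro i h0 hi; unfold greedyF; split_ifs with h1 h2 <;> omega
    · unfold greedyF; split_ifs with h1 h2 <;> omega
    · intro i hi; unfold greedyF; split_ifs with h1 h2 h3 h4 h5 h6 h7 h8 <;> omega
    · intro j hj; unfold greedyF; split_ifs with h1 h2 <;> omega

lemma greedy_neg (u v : ℤ) (hv : 0 < v) (hvu : v ≤ u) :
    ∀ i : ℤ, i < 0 → greedyF u v i = 0 := by
  intro i hi; unfold greedyF; split_ifs with h1 h2 <;> omega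

lemma greedy_nonneg (u v : ℤ) (hv : 0 < v) (hvu : v ≤ u) :
    ∀ i : ℤ, 0 ≤ greedyF u v i := by
  intro i; unfold greedyF; split_ifs with h1 h2 <;> omega

lemma greedy_cast (u v : ℤ) (hv : 0 < v) (hvu : v ≤ u) : IsCastelnuovo (greedyF u v) := by
  obtain ⟨σ, h0, h1, h2, h3, h4⟩ := greedy_props u v hv hvu
  exact ⟨((Finset.Icc (0:ℤ) (u-1)).finite_toSet).subset (greedyF_support u v hv hvu),
    greedy_neg u v hv hvu, greedy_nonneg u v hv hvu, σ, h0, h1, h2, h3⟩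

lemma greedy_weight (u v : ℤ) (hv : 0 < v) (hvu : v ≤ u) :
    2 * castWeight (greedyF u v) = (u-1)*u + 2*v := by
  have hu1 : 1 ≤ u := by omega
  have hW : castWeight (greedyF u v) = ∑ j ∈ Finset.Icc (0:ℤ) (u-1), greedyF u v j :=
    finsum_eq_sum_of_support_subset _ (greedyF_support u v hv hvu)
  have hsplit : Finset.Icc (0:ℤ) (u-1) = insert (u-1) (Finset.Icc (0:ℤ) (u-2)) := by
    have : u - 1 = (u - 2) + 1 := by ring
    rw [this, iccSuccTop 0 (u-2) (by omega)]
  have hnm : (u-1) ∉ Finset.Icc (0:ℤ) (u-2) := by simp [Finset.mem_Icc]; omega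
  have hval : greedyF u v (u-1) = v := by unfold greedyF; split_ifs with h1 h2 <;> omega
  have hcong : ∑ j ∈ Finset.Icc (0:ℤ) (u-2), greedyF u v j
      = ∑ j ∈ Finset.Icc (0:ℤ) (u-2), (j + 1) := by
    apply Finset.sum_congr rfl
    intro j hj
    simp only [Finset.mem_Icc] at hj
    unfold greedyF; split_ifs with h1 h2 <;> omega
  rw [hW, hsplit, Finset.sum_insert hnm, hval, hcong]
  have := gaussSumInt (u-2) (by omega)
  linarith

/-- Main analysis lemma. -/
lemma keyLemma (s : ℤ → ℤ) (σ : ℤ)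
    (hfin : (Function.support s).Finite) (hneg : ∀ i : ℤ, i < 0 → s i = 0)
    (hpos : ∀ i : ℤ, 0 ≤ s i) (hσ0 : 0 ≤ σ)
    (hstair : ∀ i : ℤ, 0 ≤ i → i < σ → s i = i + 1) (hσ : s σ ≤ σ)
    (hmono : ∀ i : ℤ, σ ≤ i → s (i + 1) ≤ s i) :
    castC s ≤ castWeight s - s 0 ∧
    ((∀ j : ℤ, σ < j → s j = 0) → castC s = castWeight s - s 0) ∧
    (castC s = castWeight s - s 0 → ∀ j : ℤ, σ < j → s j = 0) := by
  classical
  set t : ℤ → ℤ := fun j => s j * (s (j - 1) - s (j - 2)) with ht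
  set T : Finset ℤ := insert σ hfin.toFinset with hT
  have hσT : σ ∈ T := Finset.mem_insert_self _ _
  set N : ℤ := T.max' ⟨σ, hσT⟩ with hN
  have hσN : σ ≤ N := Finset.le_max' _ _ hσT
  have hsupN : ∀ j : ℤ, s j ≠ 0 → j ≤ N := fun j hj =>
    Finset.le_max' _ _ (Finset.mem_insert_of_mem (hfin.mem_toFinset.2 hj))
  have hsub : Function.support s ⊆ ↑(Finset.Icc (0:ℤ) N) := by
    intro j hj
    simp only [Function.mem_support] at hj
    simp only [Finset.coe_Icc, Set.mem_Icc]
    refine ⟨?_, hsupN j hj⟩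
    by_contra h
    exact hj (hneg j (by omega))
  have hsubt : Function.support t ⊆ ↑(Finset.Icc (0:ℤ) N) := by
    intro j hj
    apply hsub
    simp only [Function.mem_support, ht] at hj ⊢
    intro h
    exact hj (by rw [h]; ring)
  have hW : castWeight s = ∑ j ∈ Finset.Icc (0:ℤ) N, s j :=
    finsum_eq_sum_of_support_subset _ hsub
  have hC : castC s = ∑ j ∈ Finset.Icc (0:ℤ) N, t j :=
    finsum_eq_sum_of_support_subset _ hsubt
  -- difference facts
  have hd3 : ∀ j : ℤ, 1 ≤ j → j ≤ σ → s (j-1) - s (j-2) = 1 := by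
    intro j h1 h2
    have e1 := hstair (j-1) (by omega) (by omega)
    by_cases h : 2 ≤ j
    · have e2 := hstair (j-2) (by omega) (by omega); omega
    · have hj1 : j = 1 := by omega
      subst hj1
      have e2 : s (1-2) = 0 := hneg _ (by norm_num)
      omega
  have hd2 : ∀ j : ℤ, σ + 1 ≤ j → s (j-1) - s (j-2) ≤ 0 := by
    intro j hj
    by_cases h : σ + 2 ≤ j
    · have h' := hmono (j-2) (by omega)
      have e : j - 2 + 1 = j - 1 := by ring
      rw [e] at h'
      omega
    · have hj' : j = σ + 1 := by omega
      subst hj'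
      have e3 : σ + 1 - 1 = σ := by ring
      rw [e3]
      by_cases hσ1 : 1 ≤ σ
      · have e4 : σ + 1 - 2 = σ - 1 := by ring
        have e2 := hstair (σ-1) (by omega) (by omega)
        rw [e4, e2]
        omega
      · have hσ' : σ = 0 := by omega
        subst hσ'
        have e2 : s (0 + 1 - 2) = 0 := hneg _ (by norm_num)
        omega
  have hd1 : ∀ j : ℤ, 1 ≤ j → s (j-1) - s (j-2) ≤ 1 := by
    intro j h1
    by_cases h : j ≤ σ
    · exact le_of_eq (hd3 j h1 h)
    · have := hd2 j (by omega); omega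
  have h0mem : (0:ℤ) ∈ Finset.Icc (0:ℤ) N := by
    simp only [Finset.mem_Icc]
    omega
  have ht0 : t 0 = 0 := by
    have e1 : s ((0:ℤ) - 1) = 0 := hneg _ (by norm_num)
    have e2 : s ((0:ℤ) - 2) = 0 := hneg _ (by norm_num)
    simp only [ht, e1, e2]
    ring
  have hCe : castC s = ∑ j ∈ (Finset.Icc (0:ℤ) N).erase 0, t j := by
    rw [hC, ← Finset.sum_erase_add _ _ h0mem, ht0, add_zero]
  have hWe : castWeight s - s 0 = ∑ j ∈ (Finset.Icc (0:ℤ) N).erase 0, s j := by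
    rw [hW, ← Finset.sum_erase_add _ _ h0mem]
    ring
  have hle : ∀ j ∈ (Finset.Icc (0:ℤ) N).erase 0, t j ≤ s j := by
    intro j hj
    simp only [Finset.mem_erase, Finset.mem_Icc] at hj
    have h1 : 1 ≤ j := by omega
    calc t j = s j * (s (j-1) - s (j-2)) := rfl
      _ ≤ s j * 1 := mul_le_mul_of_nonneg_left (hd1 j h1) (hpos j)
      _ = s j := mul_one _
  refine ⟨?_, ?_, ?_⟩
  · rw [hCe, hWe]
    exact Finset.sum_le_sum hle
  · intro hz
    rw [hCe, hWe]
    apply Finset.sum_congr rfl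
    intro j hj
    simp only [Finset.mem_erase, Finset.mem_Icc] at hj
    by_cases hjσ : j ≤ σ
    · show s j * (s (j-1) - s (j-2)) = s j
      rw [hd3 j (by omega) hjσ, mul_one]
    · show s j * (s (j-1) - s (j-2)) = s j
      rw [hz j (by omega)]
      ring
  · intro heq j hj
    by_contra hne
    have hjm : j ∈ (Finset.Icc (0:ℤ) N).erase 0 := by
      simp only [Finset.mem_erase, Finset.mem_Icc]
      have := hsupN j hne
      omega
    have hsum : ∑ j ∈ (Finset.Icc (0:ℤ) N).erase 0, s j
        = ∑ j ∈ (Finset.Icc (0:ℤ) N).erase 0, t j := by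
      rw [← hCe, ← hWe, heq]
    have hall := (Finset.sum_eq_sum_iff_of_le hle).1 hsum.symm j hjm
    have hd := hd2 j (by omega)
    have htj : t j ≤ 0 := mul_nonpos_of_nonneg_of_nonpos (hpos j) hd
    have hpj : 0 < s j := lt_of_le_of_ne (hpos j) (Ne.symm hne)
    omega

lemma sigmaPos (s : ℤ → ℤ) (σ : ℤ)
    (hneg : ∀ i : ℤ, i < 0 → s i = 0) (hpos : ∀ i : ℤ, 0 ≤ s i)
    (hstair : ∀ i : ℤ, 0 ≤ i → i < σ → s i = i + 1) (hσ : s σ ≤ σ)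
    (hmono : ∀ i : ℤ, σ ≤ i → s (i + 1) ≤ s i)
    (hw : 1 ≤ castWeight s) : 1 ≤ σ ∧ s 0 = 1 := by
  have hσ1 : 1 ≤ σ := by
    by_contra h
    push_neg at h
    by_cases hσ0' : σ < 0
    · have := hneg σ hσ0'
      have := hpos (σ + 1)
      have h0 : ∀ j : ℤ, 0 ≤ j → s j = 0 := by
        refine Int.le_induction ?_ ?_
        · -- s 0 = 0 : since σ < 0 ≤ 0, monotone gives s decreasing from σ
          have key : ∀ j : ℤ, σ ≤ j → s j ≤ s σ := by
            refine Int.le_induction ?_ ?_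
            · exact le_refl _
            · intro j hj ih
              exact le_trans (hmono j hj) ih
          have := key 0 (by omega)
          have := hneg σ hσ0'
          have := hpos 0
          omega
        · intro j hj ih
          have := hmono j (by omega)
          have := hpos (j + 1)
          omega
      have : castWeight s = 0 := by
        have : s = fun _ => (0:ℤ) := by
          funext j
          by_cases hj : j < 0
          · exact hneg j hj
          · exact h0 j (by omega)
        rw [castWeight, this]
        exact finsum_zero
      omega
    · have hσ0 : σ = 0 := by omega
      subst hσ0
      have h0 : ∀ j : ℤ, 0 ≤ j → s j = 0 := by
        refine Int.le_induction ?_ ?_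
        · have := hpos 0; omega
        · intro j hj ih
          have := hmono j hj
          have := hpos (j + 1)
          omega
      have : castWeight s = 0 := by
        have : s = fun _ => (0:ℤ) := by
          funext j
          by_cases hj : j < 0
          · exact hneg j hj
          · exact h0 j (by omega)
        rw [castWeight, this]
        exact finsum_zero
      omega
  have := hstair 0 (le_refl _) (by omega)
  exact ⟨hσ1, by omega⟩

lemma shapeLemma (s : ℤ → ℤ) (σ : ℤ)
    (hneg : ∀ i : ℤ, i < 0 → s i = 0) (hpos : ∀ i : ℤ, 0 ≤ s i)
    (hstair : ∀ i : ℤ, 0 ≤ i → i < σ → s i = i + 1) (hσ : s σ ≤ σ)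
    (hz : ∀ j : ℤ, σ < j → s j = 0) (hσ1 : 1 ≤ σ) :
    ∃ u v : ℤ, 0 < v ∧ v ≤ u ∧ ∀ j : ℤ, s j = greedyF u v j := by
  by_cases ha : s σ = 0
  · refine ⟨σ, σ, by omega, le_refl _, ?_⟩
    intro j
    unfold greedyF
    split_ifs with h1 h2
    · exact hstair j h1.1 (by omega)
    · rw [h2]
      have := hstair (σ - 1) (by omega) (by omega)
      omega
    · push_neg at h1
      by_cases hj0 : j < 0
      · exact hneg j hj0
      · by_cases hjσ : j = σ
        · rw [hjσ]; exact ha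
        · have hjσ' : σ < j := by omega
          exact hz j hjσ'
  · refine ⟨σ + 1, s σ, lt_of_le_of_ne (hpos σ) (Ne.symm ha), by omega, ?_⟩
    intro j
    unfold greedyF
    split_ifs with h1 h2
    · exact hstair j h1.1 (by omega)
    · have : j = σ := by omega
      rw [this]
    · push_neg at h1
      by_cases hj0 : j < 0
      · exact hneg j hj0
      · exact hz j (by omega)

/-- for every `n ≥ 1` there is a unique Castelnuovo polynomial of
weight `n` maximizing `c(s) = ∑_j s_j (s_{j-1} - s_{j-2})`, namely the greedily
filled staircase `s(t) = 1 + 2t + ⋯ + (u-1)t^{u-2} + v t^{u-1}` (with `0 < v ≤ u`),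
and for it `c(s) = n - 1`. -/
theorem castelnuovo_unique_maximizer (n : ℤ) (hn : 1 ≤ n) :
    (∃! s : ℤ → ℤ, IsCastelnuovo s ∧ castWeight s = n ∧
        ∀ s' : ℤ → ℤ, IsCastelnuovo s' → castWeight s' = n → castC s' ≤ castC s) ∧
    (∀ s : ℤ → ℤ, IsCastelnuovo s → castWeight s = n →
      (∀ s' : ℤ → ℤ, IsCastelnuovo s' → castWeight s' = n → castC s' ≤ castC s) →
      castC s = n - 1 ∧
        ∃ u v : ℤ, 0 < u ∧ 0 < v ∧ v ≤ u ∧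
          ∀ j : ℤ, s j =
            if 0 ≤ j ∧ j < u - 1 then j + 1 else if j = u - 1 then v else 0) := by
  classical
  obtain ⟨u, v, hv, hvu, hsum⟩ := decompExists n hn
  have hu1 : 1 ≤ u := by omega
  set G : ℤ → ℤ := greedyF u v with hG
  have hGcast : IsCastelnuovo G := greedy_cast u v hv hvu
  have hGW : castWeight G = n := by
    have h2 := greedy_weight u v hv hvu
    linarith
  obtain ⟨σg, hσg0, hgstair, hgσ, hgmono, hgz⟩ := greedy_props u v hv hvu
  have hGfin : (Function.support G).Finite :=
    ((Finset.Icc (0:ℤ) (u-1)).finite_toSet).subset (greedyF_support u v hv hvu)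
  have hGC : castC G = n - 1 := by
    have hk := (keyLemma G σg hGfin (greedy_neg u v hv hvu) (greedy_nonneg u v hv hvu)
      hσg0 hgstair hgσ hgmono).2.1 hgz
    have hG0 : G 0 = 1 := greedyF_zero hv hvu
    rw [hGW, hG0] at hk
    exact hk
  have hmax : ∀ s', IsCastelnuovo s' → castWeight s' = n → castC s' ≤ n - 1 := by
    rintro s' ⟨hfin, hneg, hpos, σ, hσ0, hstair, hσ, hmono⟩ hw
    have h1 := (keyLemma s' σ hfin hneg hpos hσ0 hstair hσ hmono).1
    have hs0 : s' 0 = 1 :=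
      (sigmaPos s' σ hneg hpos hstair hσ hmono (by rw [hw]; exact hn)).2
    rw [hw, hs0] at h1
    exact h1
  have huniq : ∀ s, IsCastelnuovo s → castWeight s = n → castC s = n - 1 → s = G := by
    rintro s ⟨hfin, hneg, hpos, σ, hσ0, hstair, hσ, hmono⟩ hw hc
    obtain ⟨hσ1, hs0⟩ :=
      sigmaPos s σ hneg hpos hstair hσ hmono (by rw [hw]; exact hn)
    have hz := (keyLemma s σ hfin hneg hpos hσ0 hstair hσ hmono).2.2
      (by rw [hw, hs0]; exact hc)
    obtain ⟨u', v', hv', hvu', hseq⟩ := shapeLemma s σ hneg hpos hstair hσ hz hσ1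
    have hsG : s = greedyF u' v' := funext hseq
    have hW' : 2 * n = (u'-1)*u' + 2*v' := by
      have := greedy_weight u' v' hv' hvu'
      rw [← hsG, hw] at this
      linarith
    obtain ⟨e1, e2⟩ := decompUnique u' v' u v hv' hvu' hv hvu (by linarith)
    rw [hsG, e1, e2]
  constructor
  · refine ⟨G, ⟨hGcast, hGW, fun s' h1 h2 => le_of_le_of_eq (hmax s' h1 h2) hGC.symm⟩, ?_⟩
    rintro y ⟨hy1, hy2, hy3⟩
    have hyc : castC y = n - 1 := by
      have h1 := hmax y hy1 hy2
      have h2 := hy3 G hGcast hGW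
      omega
    exact huniq y hy1 hy2 hyc
  · intro s h1 h2 h3
    have hc : castC s = n - 1 := by
      have ha := hmax s h1 h2
      have hb := h3 G hGcast hGW
      omega
    refine ⟨hc, u, v, by omega, hv, hvu, ?_⟩
    intro j
    rw [huniq s h1 h2 hc]
    rfl
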